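/- Let V, Q be real Hilbert spaces, a : V × V → ℝ a continuous symmetric bilinear form, k : Q × Q → ℝ and b : V × Q → ℝ continuous bilinear forms, and f : ℝ → V*, g : ℝ → Q* functions into the topological duals. Suppose u : ℝ → V is differentiable at t with derivative u'(t), p : ℝ → Q, and for every s in a neighbourhood of t the equation a(u(s),v) − b(v,p(s)) = f(s)(v) holds for all v ∈ V, and at time t the equation b(u'(t),q) + k(p(t),q) = g(t)(q) holds for all q ∈ Q. Then the function s ↦ ½ a(u(s),u(s)) is differentiable at t with derivative f(t)(u'(t)) + g(t)(p(t)) − k(p(t),p(t)). -/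

import Mathlib

/-- Energy-dissipation derivative identity. If `(u, p)` solves the abstract
Biot system with symmetric continuous form `a`, continuous forms `k`, `b`, data `f`, `g`,
where the first equation holds in a neighbourhood of `t` and the second at `t`, and `u` has
derivative `u'` at `t`, then `s ↦ ½ a(u(s), u(s))` is differentiable at `t` with derivative
`f(t)(u') + g(t)(p(t)) − k(p(t), p(t))`. -/
theorem stmt_4 {V Q : Type*} [NormedAddCommGroup V] [InnerProductSpace ℝ V] [CompleteSpace V]
    [NormedAddCommGroup Q] [InnerProductSpace ℝ Q] [CompleteSpace Q]
    (a : V →ₗ[ℝ] V →ₗ[ℝ] ℝ) (k : Q →ₗ[ℝ] Q →ₗ[ℝ] ℝ) (b : V →ₗ[ℝ] Q →ₗ[ℝ] ℝ)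
    (Ca Ck Cb : ℝ)
    (hsymm : ∀ u v : V, a u v = a v u)
    (ha : ∀ u v : V, |a u v| ≤ Ca * ‖u‖ * ‖v‖)
    (hk : ∀ p q : Q, |k p q| ≤ Ck * ‖p‖ * ‖q‖)
    (hb : ∀ (v : V) (q : Q), |b v q| ≤ Cb * ‖v‖ * ‖q‖)
    (f : ℝ → V →L[ℝ] ℝ) (g : ℝ → Q →L[ℝ] ℝ)
    (u : ℝ → V) (p : ℝ → Q) (t : ℝ) (u' : V)
    (hu : HasDerivAt u u' t)
    (heq1 : ∀ᶠ s in nhds t, ∀ v : V, a (u s) v - b v (p s) = f s v)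
    (heq2 : ∀ q : Q, b u' q + k (p t) q = g t q) :
    HasDerivAt (fun s => (1 / 2) * a (u s) (u s))
      (f t u' + g t (p t) - k (p t) (p t)) t := by
  set A : V →L[ℝ] V →L[ℝ] ℝ :=
    LinearMap.mkContinuous₂ a Ca (fun x y => by
      simpa [Real.norm_eq_abs] using ha x y) with hA
  have hAapp : ∀ x y : V, A x y = a x y := fun x y => rfl
  have hbil : IsBoundedBilinearMap ℝ (fun q : V × V => A q.1 q.2) := A.isBoundedBilinearMap
  have hcomp := (hbil.hasFDerivAt (u t, u t)).comp_hasDerivAt t (HasDerivAt.prodMk hu hu)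
  have h1 : HasDerivAt (fun s => A (u s) (u s)) (A (u t) u' + A u' (u t)) t := by
    simp [IsBoundedBilinearMap.deriv_apply] at hcomp
    exact hcomp
  have h2 := h1.const_mul (1 / 2 : ℝ)
  have hval : (1 / 2 : ℝ) * (A (u t) u' + A u' (u t)) =
      f t u' + g t (p t) - k (p t) (p t) := by
    have e1 : a (u t) u' - b u' (p t) = f t u' := heq1.self_of_nhds u'
    have e2 : b u' (p t) + k (p t) (p t) = g t (p t) := heq2 (p t)
    have : A u' (u t) = A (u t) u' := by simp [hAapp, hsymm]
    rw [this, hAapp]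
    ring_nf
    linarith [e1, e2]
  rw [← hval]
  exact h2
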